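/- Fix κ ∈ (4,8). For all real numbers x_1 < x_2 < x_3 < x_4, the following identity holds: (x_2−x_1)^{2/κ}(x_3−x_1)^{2/κ}(x_3−x_2)^{2/κ}(x_4−x_1)^{1−6/κ}(x_4−x_2)^{1−6/κ}(x_4−x_3)^{1−6/κ} · ∫_{x_1}^{x_2} (u−x_1)^{−4/κ}(x_2−u)^{−4/κ}(x_3−u)^{−4/κ}(x_4−u)^{12/κ−2} du = (x_3−x_1)^{2/κ}(x_4−x_1)^{2/κ}(x_4−x_3)^{2/κ}(x_2−x_1)^{1−6/κ}(x_3−x_2)^{1−6/κ}(x_4−x_2)^{1−6/κ} · ∫_{x_3}^{x_4} (u−x_1)^{−4/κ}(u−x_2)^{12/κ−2}(u−x_3)^{−4/κ}(x_4−u)^{−4/κ} du. (Both integrals converge absolutely since −4/κ > −1. This expresses that the two Coulomb gas formulas for the same four-point conformal block, obtained by placing the conjugate charge at x_4 with integration contour [x_1,x_2] or at x_2 with integration contour [x_3,x_4], define the same function.) -/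

import Mathlib

open MeasureTheory Set

/-- the two Coulomb gas formulas for the same four-point conformal
block — conjugate charge at x₄ with integration contour [x₁,x₂], or conjugate
charge at x₂ with integration contour [x₃,x₄] — define the same function. -/
theorem four_point_conjugate_charge_identity
    (κ : ℝ) (hκ : κ ∈ Set.Ioo (4:ℝ) 8)
    (x₁ x₂ x₃ x₄ : ℝ) (h12 : x₁ < x₂) (h23 : x₂ < x₃) (h34 : x₃ < x₄) :
    (x₂ - x₁) ^ (2/κ) * (x₃ - x₁) ^ (2/κ) * (x₃ - x₂) ^ (2/κ)
        * (x₄ - x₁) ^ (1 - 6/κ) * (x₄ - x₂) ^ (1 - 6/κ) * (x₄ - x₃) ^ (1 - 6/κ)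
        * ∫ u in x₁..x₂,
            (u - x₁) ^ (-(4/κ)) * (x₂ - u) ^ (-(4/κ)) * (x₃ - u) ^ (-(4/κ))
              * (x₄ - u) ^ (12/κ - 2)
      = (x₃ - x₁) ^ (2/κ) * (x₄ - x₁) ^ (2/κ) * (x₄ - x₃) ^ (2/κ)
        * (x₂ - x₁) ^ (1 - 6/κ) * (x₃ - x₂) ^ (1 - 6/κ) * (x₄ - x₂) ^ (1 - 6/κ)
        * ∫ u in x₃..x₄,
            (u - x₁) ^ (-(4/κ)) * (u - x₂) ^ (12/κ - 2) * (u - x₃) ^ (-(4/κ))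
              * (x₄ - u) ^ (-(4/κ)) := by
  have h13 : x₁ < x₃ := h12.trans h23
  have h14 : x₁ < x₄ := h13.trans h34
  have h24 : x₂ < x₄ := h23.trans h34
  have d21 : (0:ℝ) < x₂ - x₁ := by linarith
  have d31 : (0:ℝ) < x₃ - x₁ := by linarith
  have d32 : (0:ℝ) < x₃ - x₂ := by linarith
  have d41 : (0:ℝ) < x₄ - x₁ := by linarith
  have d42 : (0:ℝ) < x₄ - x₂ := by linarith
  have d43 : (0:ℝ) < x₄ - x₃ := by linarith
  have hD : (0:ℝ) < x₂ + x₄ - x₁ - x₃ := by linarith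
  have hDne : (x₂ + x₄ - x₁ - x₃ : ℝ) ≠ 0 := ne_of_gt hD
  obtain ⟨a, hadef⟩ : ∃ a : ℝ, a = (x₂*x₄ - x₁*x₃) / (x₂ + x₄ - x₁ - x₃) := ⟨_, rfl⟩
  have hkey : a * (x₂ + x₄ - x₁ - x₃) = x₂*x₄ - x₁*x₃ := by
    rw [hadef, div_mul_cancel₀ _ hDne]
  have hp : a - x₁ = (x₂ - x₁)*(x₄ - x₁)/(x₂ + x₄ - x₁ - x₃) := by
    rw [hadef]; field_simp; ring
  have hq : a - x₂ = (x₃ - x₂)*(x₂ - x₁)/(x₂ + x₄ - x₁ - x₃) := by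
    rw [hadef]; field_simp; ring
  have hr : x₃ - a = (x₃ - x₂)*(x₄ - x₃)/(x₂ + x₄ - x₁ - x₃) := by
    rw [hadef]; field_simp; ring
  have hs' : x₄ - a = (x₄ - x₁)*(x₄ - x₃)/(x₂ + x₄ - x₁ - x₃) := by
    rw [hadef]; field_simp; ring
  have hP1 : 0 < a - x₁ := hp ▸ div_pos (mul_pos d21 d41) hD
  have hP2 : 0 < a - x₂ := hq ▸ div_pos (mul_pos d32 d21) hD
  have hP3 : 0 < x₃ - a := hr ▸ div_pos (mul_pos d32 d43) hD
  have hP4 : 0 < x₄ - a := hs' ▸ div_pos (mul_pos d41 d43) hD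
  obtain ⟨c, hcdef⟩ : ∃ c : ℝ, c = x₁*x₃ - a*(x₁+x₃) := ⟨_, rfl⟩
  obtain ⟨σ, hσdef⟩ : ∃ σ : ℝ → ℝ, σ = fun t => (a*t + c)/(t - a) := ⟨_, rfl⟩
  -- distance identities
  have happ : ∀ v : ℝ, σ v = (a*v + c)/(v - a) := fun v => by rw [hσdef]
  have h1 : ∀ t : ℝ, t - a ≠ 0 → σ t - x₁ = (a - x₁)*(t - x₃)/(t - a) := by
    intro t ht
    rw [happ, hcdef]
    field_simp
    ring
  have h2 : ∀ t : ℝ, t - a ≠ 0 → σ t - x₂ = (a - x₂)*(t - x₄)/(t - a) := by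
    intro t ht
    have e : σ t - x₂ = ((a*t + c) - x₂*(t - a))/(t - a) := by
      rw [happ]; field_simp
    rw [e, show (a*t + c) - x₂*(t - a) = (a - x₂)*(t - x₄) by
      rw [hcdef]; linear_combination hkey]
  have h3 : ∀ t : ℝ, t - a ≠ 0 → σ t - x₃ = (a - x₃)*(t - x₁)/(t - a) := by
    intro t ht
    rw [happ, hcdef]
    field_simp
    ring
  have h4 : ∀ t : ℝ, t - a ≠ 0 → x₄ - σ t = (x₄ - a)*(t - x₂)/(t - a) := by
    intro t ht
    have e : x₄ - σ t = (x₄*(t - a) - (a*t + c))/(t - a) := by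
      rw [happ]; field_simp
    rw [e, show x₄*(t - a) - (a*t + c) = (x₄ - a)*(t - x₂) by
      rw [hcdef]; linear_combination -hkey]
  have hac : a^2 + c ≠ 0 := by
    have : a^2 + c = -((a - x₁)*(x₃ - a)) := by rw [hcdef]; ring
    rw [this]
    exact neg_ne_zero.mpr (ne_of_gt (mul_pos hP1 hP3))
  have hσa : ∀ u : ℝ, u - a ≠ 0 → σ u - a = (a^2 + c)/(u - a) := by
    intro u hu
    rw [happ]
    field_simp
    ring
  have hinv : ∀ u : ℝ, u - a ≠ 0 → σ (σ u) = u := by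
    intro u hu
    have h' : σ u - a = (a^2 + c)/(u - a) := hσa u hu
    have hne : σ u - a ≠ 0 := by rw [h']; exact div_ne_zero hac hu
    have hnum : a * σ u + c = (a^2 + c)*u/(u - a) := by
      rw [happ]
      field_simp
      ring
    rw [happ (σ u), hnum, h', div_div_div_cancel_right₀ hu, mul_div_cancel_left₀ u hac]
  -- region facts
  have hIoo12 : ∀ t ∈ Ioo x₁ x₂, 0 < a - t := fun t ht => by
    have := ht.2; linarith [hP2]
  have hIoo12ne : ∀ t ∈ Ioo x₁ x₂, t - a ≠ 0 := fun t ht =>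
    ne_of_lt (by have := hIoo12 t ht; linarith)
  -- injectivity on Ioo x₁ x₂
  have hinj : Set.InjOn σ (Ioo x₁ x₂) := by
    intro u hu v hv huv
    have h1' := hinv u (hIoo12ne u hu)
    have h2' := hinv v (hIoo12ne v hv)
    rw [← h1', ← h2', huv]
  -- image
  have himg : σ '' Ioo x₁ x₂ = Ioo x₃ x₄ := by
    ext y
    constructor
    · rintro ⟨t, ht, rfl⟩
      have hta : t - a ≠ 0 := hIoo12ne t ht
      have htan : t - a < 0 := by have := hIoo12 t ht; linarith
      have h3' := h3 t hta
      have h4' := h4 t hta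
      constructor
      · have : 0 < σ t - x₃ := by
          rw [h3']
          exact div_pos_of_neg_of_neg
            (mul_neg_of_neg_of_pos (by linarith) (by linarith [ht.1])) htan
        linarith
      · have : 0 < x₄ - σ t := by
          rw [h4']
          exact div_pos_of_neg_of_neg
            (mul_neg_of_pos_of_neg hP4 (by linarith [ht.2])) htan
        linarith
    · intro hy
      have hya : 0 < y - a := by have := hy.1; linarith [hP3]
      have hyane : y - a ≠ 0 := ne_of_gt hya
      refine ⟨σ y, ⟨?_, ?_⟩, hinv y hyane⟩
      · have : 0 < σ y - x₁ := by
          rw [h1 y hyane]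
          exact div_pos (mul_pos hP1 (by linarith [hy.1])) hya
        linarith
      · have : σ y - x₂ < 0 := by
          rw [h2 y hyane]
          exact div_neg_of_neg_of_pos
            (mul_neg_of_pos_of_neg hP2 (by linarith [hy.2])) hya
        linarith
  -- derivative
  have hderiv : ∀ t ∈ Ioo x₁ x₂,
      HasDerivWithinAt σ ((a - x₁)*(x₃ - a)/((t - a)^2)) (Ioo x₁ x₂) t := by
    intro t ht
    have hta : t - a ≠ 0 := hIoo12ne t ht
    have hid1 : HasDerivAt (fun y : ℝ => a*y + c) a t := by
      simpa using ((hasDerivAt_id t).const_mul a).add_const c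
    have hid2 : HasDerivAt (fun y : ℝ => y - a) 1 t := (hasDerivAt_id t).sub_const a
    have h0 := hid1.div hid2 hta
    have heq : (a * (t - a) - (a*t + c) * 1)/((t - a)^2)
        = (a - x₁)*(x₃ - a)/((t - a)^2) := by
      congr 1
      rw [hcdef]; ring
    rw [heq] at h0
    rw [hσdef]
    exact h0.hasDerivWithinAt
  -- change of variables
  obtain ⟨F, hFdef⟩ : ∃ F : ℝ → ℝ, F = fun u =>
    (u - x₁) ^ (-(4/κ)) * (u - x₂) ^ (12/κ - 2) * (u - x₃) ^ (-(4/κ))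
      * (x₄ - u) ^ (-(4/κ)) := ⟨_, rfl⟩
  have hchg : ∫ u in Ioo x₃ x₄, F u
      = ∫ t in Ioo x₁ x₂, |(a - x₁)*(x₃ - a)/((t - a)^2)| • F (σ t) := by
    rw [← himg]
    exact integral_image_eq_integral_abs_deriv_smul measurableSet_Ioo hderiv hinj F
  -- pointwise identity on Ioo x₁ x₂
  obtain ⟨K, hKdef⟩ : ∃ K : ℝ, K = (a - x₁) ^ (1 - 4/κ) * (a - x₂) ^ (12/κ - 2) * (x₃ - a) ^ (1 - 4/κ)
      * (x₄ - a) ^ (-(4/κ)) := ⟨_, rfl⟩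
  have hpt : EqOn (fun t => |(a - x₁)*(x₃ - a)/((t - a)^2)| • F (σ t))
      (fun t => K * ((t - x₁) ^ (-(4/κ)) * (x₂ - t) ^ (-(4/κ)) * (x₃ - t) ^ (-(4/κ))
        * (x₄ - t) ^ (12/κ - 2))) (Ioo x₁ x₂) := by
    intro t ht
    have hta : t - a ≠ 0 := hIoo12ne t ht
    have hat : 0 < a - t := hIoo12 t ht
    have ht1 : 0 < t - x₁ := by linarith [ht.1]
    have ht2 : 0 < x₂ - t := by linarith [ht.2]
    have ht3 : 0 < x₃ - t := by linarith [ht.2]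
    have ht4 : 0 < x₄ - t := by linarith [ht.2]
    have e1 : σ t - x₁ = (a - x₁)*(x₃ - t)/(a - t) := by
      rw [h1 t hta, div_eq_div_iff hta (ne_of_gt hat)]; ring
    have e2 : σ t - x₂ = (a - x₂)*(x₄ - t)/(a - t) := by
      rw [h2 t hta, div_eq_div_iff hta (ne_of_gt hat)]; ring
    have e3 : σ t - x₃ = (x₃ - a)*(t - x₁)/(a - t) := by
      rw [h3 t hta, div_eq_div_iff hta (ne_of_gt hat)]; ring
    have e4 : x₄ - σ t = (x₄ - a)*(x₂ - t)/(a - t) := by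
      rw [h4 t hta, div_eq_div_iff hta (ne_of_gt hat)]; ring
    simp only [hFdef, hKdef, smul_eq_mul, e1, e2, e3, e4]
    rw [show (t - a)^2 = (a - t)^2 by ring]
    rw [abs_of_pos (div_pos (mul_pos hP1 hP3) (pow_pos hat 2))]
    have efac : (a - x₁)*(x₃ - a)/(a - t)^2
        = Real.exp (Real.log (a - x₁) + Real.log (x₃ - a) - 2*Real.log (a - t)) := by
      rw [Real.exp_sub, Real.exp_add, Real.exp_log hP1, Real.exp_log hP3,
        show (2:ℝ)*Real.log (a - t) = Real.log (a - t) + Real.log (a - t) by ring,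
        Real.exp_add, Real.exp_log hat]
      ring
    rw [efac]
    rw [Real.rpow_def_of_pos (div_pos (mul_pos hP1 ht3) hat),
        Real.rpow_def_of_pos (div_pos (mul_pos hP2 ht4) hat),
        Real.rpow_def_of_pos (div_pos (mul_pos hP3 ht1) hat),
        Real.rpow_def_of_pos (div_pos (mul_pos hP4 ht2) hat),
        Real.rpow_def_of_pos hP1, Real.rpow_def_of_pos hP2, Real.rpow_def_of_pos hP3,
        Real.rpow_def_of_pos hP4, Real.rpow_def_of_pos ht1, Real.rpow_def_of_pos ht2,
        Real.rpow_def_of_pos ht3, Real.rpow_def_of_pos ht4,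
        Real.log_div (ne_of_gt (mul_pos hP1 ht3)) (ne_of_gt hat),
        Real.log_div (ne_of_gt (mul_pos hP2 ht4)) (ne_of_gt hat),
        Real.log_div (ne_of_gt (mul_pos hP3 ht1)) (ne_of_gt hat),
        Real.log_div (ne_of_gt (mul_pos hP4 ht2)) (ne_of_gt hat),
        Real.log_mul (ne_of_gt hP1) (ne_of_gt ht3),
        Real.log_mul (ne_of_gt hP2) (ne_of_gt ht4),
        Real.log_mul (ne_of_gt hP3) (ne_of_gt ht1),
        Real.log_mul (ne_of_gt hP4) (ne_of_gt ht2)]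
    simp only [← Real.exp_add]
    rw [Real.exp_eq_exp]
    ring
  -- prefactor identity
  have hpref : (x₂ - x₁) ^ (2/κ) * (x₃ - x₁) ^ (2/κ) * (x₃ - x₂) ^ (2/κ)
        * (x₄ - x₁) ^ (1 - 6/κ) * (x₄ - x₂) ^ (1 - 6/κ) * (x₄ - x₃) ^ (1 - 6/κ)
      = (x₃ - x₁) ^ (2/κ) * (x₄ - x₁) ^ (2/κ) * (x₄ - x₃) ^ (2/κ)
        * (x₂ - x₁) ^ (1 - 6/κ) * (x₃ - x₂) ^ (1 - 6/κ) * (x₄ - x₂) ^ (1 - 6/κ) * K := by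
    rw [hKdef, hp, hq, hr, hs']
    rw [Real.rpow_def_of_pos (div_pos (mul_pos d21 d41) hD),
        Real.rpow_def_of_pos (div_pos (mul_pos d32 d21) hD),
        Real.rpow_def_of_pos (div_pos (mul_pos d32 d43) hD),
        Real.rpow_def_of_pos (div_pos (mul_pos d41 d43) hD)]
    simp only [Real.rpow_def_of_pos d21, Real.rpow_def_of_pos d31,
        Real.rpow_def_of_pos d32, Real.rpow_def_of_pos d41,
        Real.rpow_def_of_pos d42, Real.rpow_def_of_pos d43]
    rw [Real.log_div (ne_of_gt (mul_pos d21 d41)) hDne,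
        Real.log_div (ne_of_gt (mul_pos d32 d21)) hDne,
        Real.log_div (ne_of_gt (mul_pos d32 d43)) hDne,
        Real.log_div (ne_of_gt (mul_pos d41 d43)) hDne,
        Real.log_mul (ne_of_gt d21) (ne_of_gt d41),
        Real.log_mul (ne_of_gt d32) (ne_of_gt d21),
        Real.log_mul (ne_of_gt d32) (ne_of_gt d43),
        Real.log_mul (ne_of_gt d41) (ne_of_gt d43)]
    simp only [← Real.exp_add]
    rw [Real.exp_eq_exp]
    ring
  -- assemble
  rw [intervalIntegral.integral_of_le h12.le, intervalIntegral.integral_of_le h34.le,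
    integral_Ioc_eq_integral_Ioo, integral_Ioc_eq_integral_Ioo]
  have : (∫ u in Ioo x₃ x₄,
      (u - x₁) ^ (-(4/κ)) * (u - x₂) ^ (12/κ - 2) * (u - x₃) ^ (-(4/κ))
        * (x₄ - u) ^ (-(4/κ)))
      = K * ∫ t in Ioo x₁ x₂,
        (t - x₁) ^ (-(4/κ)) * (x₂ - t) ^ (-(4/κ)) * (x₃ - t) ^ (-(4/κ))
          * (x₄ - t) ^ (12/κ - 2) := by
    rw [show (∫ u in Ioo x₃ x₄,
        (u - x₁) ^ (-(4/κ)) * (u - x₂) ^ (12/κ - 2) * (u - x₃) ^ (-(4/κ))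
          * (x₄ - u) ^ (-(4/κ))) = ∫ u in Ioo x₃ x₄, F u by rw [hFdef], hchg,
      setIntegral_congr_fun measurableSet_Ioo hpt, integral_const_mul]
  rw [this, hpref]
  ring
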